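/- Let A ∈ ℝ^{m×N} with rank(A) = m, y ∈ ℝ^m, p ∈ [2,∞) and α > 0. Then the gradient-flow state satisfies, componentwise for i = 1,…,N and every T ≥ 0: [ψ_α(T)]_i = α^p h_p( C ∫₀ᵀ [r(t)]_i dt ), where r(t) = Aᵀ(y − Aψ_α(t)), and C = 4 if p = 2 and C = p(p−2)α^{p−2} if p > 2. -/

import Mathlib

noncomputable section

/-- The Euclidean (ℓ²) norm of a vector in ℝⁿ. -/
def norm2 {n : ℕ} (v : Fin n → ℝ) : ℝ := Real.sqrt (∑ i, v i ^ 2)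

/-- The ℓ¹ norm of a vector in ℝⁿ. -/
def norm1 {n : ℕ} (v : Fin n → ℝ) : ℝ := ∑ i, |v i|

/-- The sup (ℓ^∞) norm of a vector in ℝⁿ. -/
def normInf {n : ℕ} (v : Fin n → ℝ) : ℝ := ⨆ i, |v i|

/-- The ℓʳ (quasi-)norm ‖v‖_r = (∑ |v i|^r)^(1/r). -/
def normr {n : ℕ} (r : ℝ) (v : Fin n → ℝ) : ℝ := (∑ i, |v i| ^ r) ^ (1 / r)

/-- The smallest singular value of `A`, via `σ_min(A) = inf {‖Aᵀ z‖₂ : ‖z‖₂ = 1}`. -/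
def sigmaMin {m N : ℕ} (A : Matrix (Fin m) (Fin N) ℝ) : ℝ :=
  sInf {c : ℝ | ∃ z : Fin m → ℝ, norm2 z = 1 ∧ c = norm2 (A.transpose.mulVec z)}

/-- The entropy H(z) = −∑ |z i| ln |z i| (with the convention 0 · ln 0 = 0,
which holds automatically since `Real.log 0 = 0`). -/
def Hent {n : ℕ} (z : Fin n → ℝ) : ℝ := -∑ i, |z i| * Real.log |z i|

/-- The set 𝒰(A,y) of basis-pursuit minimizers: minimizers of ‖·‖₁ subject to Az = y. -/
def BPset {m N : ℕ} (A : Matrix (Fin m) (Fin N) ℝ) (y : Fin m → ℝ) : Set (Fin N → ℝ) :=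
  {z | A.mulVec z = y ∧ ∀ w : Fin N → ℝ, A.mulVec w = y → norm1 z ≤ norm1 w}

/-- The basis-pursuit minimum value R(A,y) = min {‖z‖₁ : Az = y}. -/
def Rmin {m N : ℕ} (A : Matrix (Fin m) (Fin N) ℝ) (y : Fin m → ℝ) : ℝ :=
  sInf (norm1 '' {z : Fin N → ℝ | A.mulVec z = y})

/-- The function h_p: h₂(t) = 2 sinh t, and for p > 2,
h_p(t) = (1−t)^{−p/(p−2)} − (1+t)^{−p/(p−2)}. -/
def hfun (p t : ℝ) : ℝ :=
  if p = 2 then 2 * Real.sinh t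
  else (1 - t) ^ (-(p / (p - 2))) - (1 + t) ^ (-(p / (p - 2)))

/-- The natural domain of h_p: all of ℝ when p = 2, and (−1,1) when p > 2. -/
def hDomain (p : ℝ) : Set ℝ := if p = 2 then Set.univ else Set.Ioo (-1) 1

/-- The inverse h_p^{-1} : ℝ → ℝ of h_p (h_p is a strictly increasing bijection
from its domain onto ℝ). -/
def hInv (p u : ℝ) : ℝ := Function.invFunOn (hfun p) (hDomain p) u

/-- q_p(u) = ∫₀ᵘ h_p^{−1}(v) dv. -/
def qfun (p u : ℝ) : ℝ := ∫ v in (0:ℝ)..u, hInv p v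

/-- Q_p(z) = α^p ∑ q_p(z i / α^p). -/
def Qfun {n : ℕ} (p α : ℝ) (z : Fin n → ℝ) : ℝ := α ^ p * ∑ i, qfun p (z i / α ^ p)

/-- g_p: g₂(u) = |u| ln(|u|/e) (with g₂(0) = 0), and for p > 2,
g_p(u) = |u| − (p/2)|u|^{2/p}. -/
def gfun (p u : ℝ) : ℝ :=
  if p = 2 then (if u = 0 then 0 else |u| * Real.log (|u| / Real.exp 1))
  else |u| - p / 2 * |u| ^ (2 / p)

/-- G_p(z) = α^p ∑ g_p(z i / α^p). -/
def Gfun {n : ℕ} (p α : ℝ) (z : Fin n → ℝ) : ℝ := α ^ p * ∑ i, gfun p (z i / α ^ p)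

/-- The predictor ψ_θ = θ₊^p − θ₋^p (componentwise powers), for a parameter vector
θ = (θ₊, θ₋) ∈ ℝ^{2N}. -/
def psiOf {N : ℕ} (p : ℝ) (θ : EuclideanSpace ℝ (Fin N ⊕ Fin N)) : Fin N → ℝ :=
  fun i => θ (Sum.inl i) ^ p - θ (Sum.inr i) ^ p

/-- The squared loss L(θ) = (1/2)‖A ψ_θ − y‖₂². -/
def lossFun {m N : ℕ} (A : Matrix (Fin m) (Fin N) ℝ) (y : Fin m → ℝ) (p : ℝ)
    (θ : EuclideanSpace ℝ (Fin N ⊕ Fin N)) : ℝ :=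
  (1 / 2) * ∑ j, (A.mulVec (psiOf p θ) j - y j) ^ 2

end

set_option maxHeartbeats 1000000

noncomputable section StmtAux
open Set


/-- the claimed gradient -/
def Gv {m N : ℕ} (A : Matrix (Fin m) (Fin N) ℝ) (y : Fin m → ℝ) (p : ℝ)
    (ξ : EuclideanSpace ℝ (Fin N ⊕ Fin N)) : EuclideanSpace ℝ (Fin N ⊕ Fin N) :=
  WithLp.toLp 2 (fun idx => Sum.elim
    (fun k => p * ξ (Sum.inl k) ^ (p-1) * (∑ j, A j k * (A.mulVec (psiOf p ξ) j - y j)))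
    (fun k => -(p * ξ (Sum.inr k) ^ (p-1) * (∑ j, A j k * (A.mulVec (psiOf p ξ) j - y j)))) idx)

theorem loss_grad (A : Matrix (Fin m) (Fin N) ℝ) (y : Fin m → ℝ) (p : ℝ) (hp : 1 ≤ p)
    (ξ : EuclideanSpace ℝ (Fin N ⊕ Fin N)) :
    HasGradientAt (lossFun A y p) (Gv A y p ξ) ξ := by
  classical
  have hpow : ∀ ι : Fin N ⊕ Fin N, HasFDerivAt (fun ξ : EuclideanSpace ℝ (Fin N ⊕ Fin N) => ξ ι ^ p)
      ((p * ξ ι ^ (p-1)) • (EuclideanSpace.proj ι : EuclideanSpace ℝ (Fin N ⊕ Fin N) →L[ℝ] ℝ)) ξ := by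
    intro ι
    have h1 : HasDerivAt (fun x : ℝ => x ^ p) (p * ξ ι ^ (p-1)) (ξ ι) :=
      Real.hasDerivAt_rpow_const (Or.inr hp)
    have h2 := (EuclideanSpace.proj ι : EuclideanSpace ℝ (Fin N ⊕ Fin N) →L[ℝ] ℝ).hasFDerivAt (x := ξ)
    exact h1.comp_hasFDerivAt ξ h2
  have hψ : ∀ k : Fin N, HasFDerivAt (fun ξ : EuclideanSpace ℝ (Fin N ⊕ Fin N) => psiOf p ξ k)
      ((p * ξ (Sum.inl k) ^ (p-1)) • (EuclideanSpace.proj (Sum.inl k) : EuclideanSpace ℝ (Fin N ⊕ Fin N) →L[ℝ] ℝ)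
        - (p * ξ (Sum.inr k) ^ (p-1)) • (EuclideanSpace.proj (Sum.inr k) : EuclideanSpace ℝ (Fin N ⊕ Fin N) →L[ℝ] ℝ)) ξ :=
    fun k => (hpow (Sum.inl k)).sub (hpow (Sum.inr k))
  have herr : ∀ j : Fin m, HasFDerivAt (fun ξ : EuclideanSpace ℝ (Fin N ⊕ Fin N) => A.mulVec (psiOf p ξ) j - y j)
      (∑ k, A j k • ((p * ξ (Sum.inl k) ^ (p-1)) • (EuclideanSpace.proj (Sum.inl k) : EuclideanSpace ℝ (Fin N ⊕ Fin N) →L[ℝ] ℝ)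
        - (p * ξ (Sum.inr k) ^ (p-1)) • (EuclideanSpace.proj (Sum.inr k) : EuclideanSpace ℝ (Fin N ⊕ Fin N) →L[ℝ] ℝ))) ξ := by
    intro j
    have : (fun ξ : EuclideanSpace ℝ (Fin N ⊕ Fin N) => A.mulVec (psiOf p ξ) j - y j)
        = fun ξ : EuclideanSpace ℝ (Fin N ⊕ Fin N) => (∑ k, A j k * psiOf p ξ k) - y j := by
      funext ξ; simp [Matrix.mulVec, dotProduct]
    rw [this]
    exact (HasFDerivAt.fun_sum (fun k _ => (hψ k).const_mul (A j k))).sub_const (y j)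
  have hloss : HasFDerivAt (lossFun A y p)
      ((1/2 : ℝ) • ∑ j, ((2:ℝ) * (A.mulVec (psiOf p ξ) j - y j)) •
        (∑ k, A j k • ((p * ξ (Sum.inl k) ^ (p-1)) • (EuclideanSpace.proj (Sum.inl k) : EuclideanSpace ℝ (Fin N ⊕ Fin N) →L[ℝ] ℝ)
        - (p * ξ (Sum.inr k) ^ (p-1)) • (EuclideanSpace.proj (Sum.inr k) : EuclideanSpace ℝ (Fin N ⊕ Fin N) →L[ℝ] ℝ)))) ξ := by
    have hsq : ∀ j : Fin m, HasFDerivAt (fun ξ : EuclideanSpace ℝ (Fin N ⊕ Fin N) => (A.mulVec (psiOf p ξ) j - y j) ^ 2)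
        (((2:ℝ) * (A.mulVec (psiOf p ξ) j - y j)) •
        (∑ k, A j k • ((p * ξ (Sum.inl k) ^ (p-1)) • (EuclideanSpace.proj (Sum.inl k) : EuclideanSpace ℝ (Fin N ⊕ Fin N) →L[ℝ] ℝ)
        - (p * ξ (Sum.inr k) ^ (p-1)) • (EuclideanSpace.proj (Sum.inr k) : EuclideanSpace ℝ (Fin N ⊕ Fin N) →L[ℝ] ℝ)))) ξ := by
      intro j
      have h := (herr j).mul (herr j)
      have heqf : (fun ξ : EuclideanSpace ℝ (Fin N ⊕ Fin N) => (A.mulVec (psiOf p ξ) j - y j) ^ 2)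
          = fun ξ : EuclideanSpace ℝ (Fin N ⊕ Fin N) => (A.mulVec (psiOf p ξ) j - y j) * (A.mulVec (psiOf p ξ) j - y j) := by
        funext ξ; ring
      rw [heqf, two_mul, add_smul]
      exact h
    exact (HasFDerivAt.fun_sum (fun j (_ : j ∈ Finset.univ) => hsq j)).const_mul (1/2)
  have heq : ((1/2 : ℝ) • ∑ j, ((2:ℝ) * (A.mulVec (psiOf p ξ) j - y j)) •
        (∑ k, A j k • ((p * ξ (Sum.inl k) ^ (p-1)) • (EuclideanSpace.proj (Sum.inl k) : EuclideanSpace ℝ (Fin N ⊕ Fin N) →L[ℝ] ℝ)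
        - (p * ξ (Sum.inr k) ^ (p-1)) • (EuclideanSpace.proj (Sum.inr k) : EuclideanSpace ℝ (Fin N ⊕ Fin N) →L[ℝ] ℝ))))
      = InnerProductSpace.toDual ℝ (EuclideanSpace ℝ (Fin N ⊕ Fin N)) (Gv A y p ξ) := by
    apply ContinuousLinearMap.ext
    intro v
    simp only [ContinuousLinearMap.smul_apply, ContinuousLinearMap.coe_sum',
      Finset.sum_apply, ContinuousLinearMap.coe_sub', Pi.sub_apply,
      InnerProductSpace.toDual_apply_apply, PiLp.inner_apply,
      RCLike.inner_apply, conj_trivial, smul_eq_mul, PiLp.proj_apply]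
    rw [Fintype.sum_sum_type]
    simp only [Gv, PiLp.toLp_apply, Sum.elim_inl, Sum.elim_inr]
    simp only [Finset.mul_sum, Finset.sum_mul, neg_mul, ← Finset.sum_neg_distrib,
      ← Finset.sum_add_distrib]
    rw [Finset.sum_comm]
    apply Finset.sum_congr rfl
    intro k _
    apply Finset.sum_congr rfl
    intro j _
    ring
  rw [heq] at hloss
  have h2 := hasFDerivAt_iff_hasGradientAt.mp hloss
  rwa [LinearIsometryEquiv.symm_apply_apply] at h2


lemma ode_uniq (p : ℝ) (hp : 2 ≤ p) (b : ℝ) (hb : 0 ≤ b) (r : ℝ → ℝ) (hr : Continuous r)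
    (f g : ℝ → ℝ) (hfc : ContinuousOn f (Icc 0 b)) (hgc : ContinuousOn g (Icc 0 b))
    (hf : ∀ t ∈ Ico (0:ℝ) b, HasDerivWithinAt f (p * f t ^ (p-1) * r t) (Ici t) t)
    (hg : ∀ t ∈ Ico (0:ℝ) b, HasDerivWithinAt g (p * g t ^ (p-1) * r t) (Ici t) t)
    (h0 : f 0 = g 0) : EqOn f g (Icc 0 b) := by
  obtain ⟨Bf, hBf⟩ := (isCompact_Icc (a := (0:ℝ)) (b := b)).exists_bound_of_continuousOn hfc
  obtain ⟨Bg, hBg⟩ := (isCompact_Icc (a := (0:ℝ)) (b := b)).exists_bound_of_continuousOn hgc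
  obtain ⟨Mr, hMr⟩ :=
    (isCompact_Icc (a := (0:ℝ)) (b := b)).exists_bound_of_continuousOn hr.continuousOn
  have hMr0 : 0 ≤ Mr := le_trans (norm_nonneg _) (hMr 0 ⟨le_refl _, hb⟩)
  set B : ℝ := |Bf| + |Bg| + 1 with hB
  have hB0 : 0 < B := by positivity
  set v : ℝ → ℝ → ℝ := fun t x => x ^ (p-1) * (p * r (min (max t 0) b)) with hv_def
  have hclamp : ∀ t : ℝ, min (max t 0) b ∈ Icc (0:ℝ) b :=
    fun t => ⟨le_min (le_max_right t 0) hb, min_le_right _ _⟩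
  set K : NNReal := ((p-1) * B^(p-2) * (p * Mr)).toNNReal with hK
  have hKval : 0 ≤ (p-1) * B^(p-2) * (p * Mr) := by
    have : (0:ℝ) ≤ B^(p-2) := Real.rpow_nonneg hB0.le _
    have hp0 : (0:ℝ) ≤ p := by linarith
    have : (0:ℝ) ≤ p - 1 := by linarith
    positivity
  have hv : ∀ t, LipschitzOnWith K (v t) (Icc (-B) B) := by
    intro t
    apply (convex_Icc (-B) B).lipschitzOnWith_of_nnnorm_hasDerivWithin_le
      (f' := fun x => (p-1) * x^(p-2) * (p * r (min (max t 0) b)))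
    · intro x _
      have hd := ((Real.hasDerivAt_rpow_const (p := p-1) (x := x)
        (Or.inr (by linarith))).hasDerivWithinAt (s := Icc (-B) B)).mul_const
        (p * r (min (max t 0) b))
      have he : p - 1 - 1 = p - 2 := by ring
      rw [he] at hd
      exact hd
    · intro x hx
      rw [Real.le_toNNReal_iff_coe_le hKval, coe_nnnorm, Real.norm_eq_abs]
      have h1 : |x ^ (p-2)| ≤ B ^ (p-2) := by
        calc |x ^ (p-2)| ≤ |x| ^ (p-2) := Real.abs_rpow_le_abs_rpow x (p-2)
        _ ≤ B ^ (p-2) := Real.rpow_le_rpow (abs_nonneg x) (abs_le.mpr hx) (by linarith)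
      have h2 : |r (min (max t 0) b)| ≤ Mr := by
        have := hMr _ (hclamp t); rwa [Real.norm_eq_abs] at this
      have hp1 : (0:ℝ) ≤ p - 1 := by linarith
      calc |(p-1) * x^(p-2) * (p * r (min (max t 0) b))|
          = (p-1) * |x^(p-2)| * (p * |r (min (max t 0) b)|) := by
            rw [abs_mul, abs_mul, abs_mul, abs_of_nonneg hp1, abs_of_nonneg (by linarith : (0:ℝ) ≤ p)]
        _ ≤ (p-1) * B^(p-2) * (p * Mr) := by
            apply mul_le_mul
            · exact mul_le_mul_of_nonneg_left h1 hp1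
            · exact mul_le_mul_of_nonneg_left h2 (by linarith)
            · positivity
            · positivity
  have hmem : ∀ (u : ℝ → ℝ) (Bu : ℝ), (∀ s ∈ Icc (0:ℝ) b, ‖u s‖ ≤ Bu) →
      ∀ t ∈ Ico (0:ℝ) b, |Bu| ≤ |Bf| + |Bg| → u t ∈ Icc (-B) B := by
    intro u Bu hBu t ht hBu'
    have h1 := hBu t (Ico_subset_Icc_self ht)
    rw [Real.norm_eq_abs] at h1
    have h2 := abs_le.mp (le_trans h1 (le_trans (le_abs_self Bu) hBu'))
    constructor <;> [linarith [h2.1]; linarith [h2.2]]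
  have hderiv : ∀ (u : ℝ → ℝ), (∀ t ∈ Ico (0:ℝ) b, HasDerivWithinAt u (p * u t ^ (p-1) * r t) (Ici t) t) →
      ∀ t ∈ Ico (0:ℝ) b, HasDerivWithinAt u (v t (u t)) (Ici t) t := by
    intro u hu t ht
    have hclampt : min (max t 0) b = t := by
      rw [max_eq_left ht.1, min_eq_left ht.2.le]
    have hveq : v t (u t) = p * u t ^ (p-1) * r t := by
      simp only [hv_def, hclampt]; ring
    rw [hveq]; exact hu t ht
  exact ODE_solution_unique_of_mem_Icc_right (s := fun _ => Icc (-B) B) (fun t _ => hv t) hfc (hderiv f hf)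
    (fun t ht => hmem f Bf hBf t ht (by simp))
    hgc (hderiv g hg)
    (fun t ht => hmem g Bg hBg t ht (by simp))
    h0


lemma ode2 (α : ℝ) (r : ℝ → ℝ) (hr : Continuous r) (f : ℝ → ℝ) (hf0 : f 0 = α)
    (hf : ∀ t, 0 ≤ t → HasDerivWithinAt f (2 * f t * r t) (Set.Ici 0) t)
    (T : ℝ) (hT : 0 ≤ T) :
    f T = α * Real.exp (2 * ∫ s in (0:ℝ)..T, r s) := by
  set R : ℝ → ℝ := fun u => ∫ s in (0:ℝ)..u, r s with hR_def
  have hR : ∀ t : ℝ, HasDerivAt R (r t) t :=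
    fun t => (hr.integral_hasStrictDerivAt 0 t).hasDerivAt
  set g : ℝ → ℝ := fun u => f u * Real.exp (-(2 * R u)) with hg_def
  have hgc : ContinuousOn g (Icc 0 T) := by
    apply ContinuousOn.mul
    · exact (fun t ht => ((hf t ht.1).continuousWithinAt.mono Icc_subset_Ici_self))
    · exact (Real.continuous_exp.comp ((continuous_const.mul
        (continuous_iff_continuousAt.mpr (fun t => (hR t).continuousAt))).neg)).continuousOn
  have hgd : ∀ t ∈ Ico (0:ℝ) T, HasDerivWithinAt g 0 (Ici t) t := by
    intro t ht
    have h1 : HasDerivWithinAt f (2 * f t * r t) (Ici t) t :=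
      (hf t ht.1).mono (Ici_subset_Ici.mpr ht.1)
    have h2 : HasDerivAt (fun u => Real.exp (-(2 * R u))) (Real.exp (-(2 * R t)) * (-(2 * r t))) t := by
      have h3 : HasDerivAt (fun u => -(2 * R u)) (-(2 * r t)) t := ((hR t).const_mul 2).neg
      exact (Real.hasDerivAt_exp _).comp t h3
    have h4 := h1.mul h2.hasDerivWithinAt
    have h5 : 2 * f t * r t * Real.exp (-(2 * R t)) +
        f t * (Real.exp (-(2 * R t)) * -(2 * r t)) = 0 := by ring
    rwa [h5] at h4
  have hconst := constant_of_has_deriv_right_zero hgc hgd T ⟨hT, le_refl T⟩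
  have hg0 : g 0 = α := by
    simp [hg_def, hR_def, hf0]
  rw [hg0] at hconst
  have hexp : Real.exp (-(2 * R T)) * Real.exp (2 * R T) = 1 := by
    rw [← Real.exp_add]; simp
  have : f T = α * Real.exp (2 * R T) := by
    have := congrArg (fun z => z * Real.exp (2 * R T)) hconst
    simp only [hg_def] at this
    rw [mul_assoc, hexp, mul_one] at this
    exact this
  exact this

lemma ode_p (p : ℝ) (hp : 2 < p) (α : ℝ) (hα : 0 < α) (r : ℝ → ℝ) (hr : Continuous r)
    (f : ℝ → ℝ) (hf0 : f 0 = α)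
    (hf : ∀ t, 0 ≤ t → HasDerivWithinAt f (p * f t ^ (p-1) * r t) (Set.Ici 0) t)
    (T : ℝ) (hT : 0 ≤ T) :
    (∀ t ∈ Icc (0:ℝ) T, 0 < 1 - (p*(p-2)*α^(p-2)) * ∫ s in (0:ℝ)..t, r s) ∧
    f T = α * (1 - (p*(p-2)*α^(p-2)) * ∫ s in (0:ℝ)..T, r s) ^ (-(1/(p-2))) := by
  have hp2 : (0:ℝ) < p - 2 := by linarith
  have hp2' : p - 2 ≠ 0 := ne_of_gt hp2
  set c : ℝ := p*(p-2)*α^(p-2) with hc_def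
  have hc : 0 < c := by
    have := Real.rpow_pos_of_pos hα (p-2)
    positivity
  set R : ℝ → ℝ := fun u => ∫ s in (0:ℝ)..u, r s with hR_def
  have hR : ∀ t : ℝ, HasDerivAt R (r t) t :=
    fun t => (hr.integral_hasStrictDerivAt 0 t).hasDerivAt
  have hRc : Continuous R := continuous_iff_continuousAt.mpr (fun t => (hR t).continuousAt)
  have hR0 : R 0 = 0 := intervalIntegral.integral_same
  set X : ℝ → ℝ := fun u => 1 - c * R u with hX_def
  have hXc : Continuous X := continuous_const.sub (continuous_const.mul hRc)
  have hX0 : X 0 = 1 := by simp [hX_def, hR0]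
  set e : ℝ := -(1/(p-2)) with he_def
  set y : ℝ → ℝ := fun u => α * (X u) ^ e with hy_def
  have hy0 : y 0 = α := by simp [hy_def, hX0]
  have hαp1 : α ^ (p-1) = α ^ (p-2) * α := by
    rw [← Real.rpow_add_one (ne_of_gt hα) (p-2)]; congr 1; ring
  have hy' : ∀ t : ℝ, 0 < X t → HasDerivAt y (p * y t ^ (p-1) * r t) t := by
    intro t hXt
    have h1 : HasDerivAt X (-(c * r t)) t := ((hR t).const_mul c).const_sub 1
    have h2 : HasDerivAt (fun x : ℝ => x ^ e) (e * X t ^ (e - 1)) (X t) :=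
      Real.hasDerivAt_rpow_const (Or.inl (ne_of_gt hXt))
    have h3 := ((h2.comp t h1).const_mul α)
    have hval : α * (e * X t ^ (e - 1) * -(c * r t)) = p * y t ^ (p-1) * r t := by
      have hee : e * (p - 1) = e - 1 := by
        rw [he_def]; field_simp; ring
      have hyp : y t ^ (p-1) = α ^ (p-1) * X t ^ (e - 1) := by
        rw [hy_def]
        rw [Real.mul_rpow hα.le (Real.rpow_nonneg hXt.le _), ← Real.rpow_mul hXt.le, hee]
      rw [hyp, hαp1, hc_def, he_def]
      field_simp
    rwa [hval] at h3
  have hfc : ContinuousOn f (Ici 0) :=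
    fun t ht => (hf t ht).continuousWithinAt
  have key : ∀ b : ℝ, 0 ≤ b → b ≤ T → (∀ s ∈ Icc (0:ℝ) b, 0 < X s) → EqOn f y (Icc 0 b) := by
    intro b hb0 hbT hpos
    apply ode_uniq p hp.le b hb0 r hr f y (hfc.mono Icc_subset_Ici_self)
    · exact fun s hs => ((hy' s (hpos s hs)).continuousAt).continuousWithinAt
    · exact fun t ht => (hf t ht.1).mono (Ici_subset_Ici.mpr ht.1)
    · exact fun t ht => (hy' t (hpos t (Ico_subset_Icc_self ht))).hasDerivWithinAt
    · rw [hf0, hy0]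
  have hposT : ∀ t ∈ Icc (0:ℝ) T, 0 < X t := by
    by_contra hcon
    push_neg at hcon
    obtain ⟨t0, ht0, hXt0⟩ := hcon
    set Kset : Set ℝ := {t | t ∈ Icc (0:ℝ) T ∧ X t ≤ 0} with hK_def
    have hKclosed : IsClosed Kset := by
      have : Kset = Icc (0:ℝ) T ∩ X ⁻¹' (Iic 0) := by
        ext u; simp [hK_def, Set.mem_inter_iff]
      rw [this]
      exact isClosed_Icc.inter (isClosed_Iic.preimage hXc)
    have hKne : Kset.Nonempty := ⟨t0, ht0, hXt0⟩
    have hKbdd : BddBelow Kset := ⟨0, fun u hu => hu.1.1⟩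
    set ts : ℝ := sInf Kset with hts_def
    have hts_mem : ts ∈ Kset := hKclosed.csInf_mem hKne hKbdd
    have hts0 : 0 ≤ ts := hts_mem.1.1
    have htsT : ts ≤ T := hts_mem.1.2
    have htsX : X ts ≤ 0 := hts_mem.2
    have hts_pos : 0 < ts := by
      rcases lt_or_eq_of_le hts0 with h | h
      · exact h
      · exfalso; rw [← h] at htsX; rw [hX0] at htsX; linarith
    have hpos' : ∀ s, 0 ≤ s → s < ts → 0 < X s := by
      intro s hs0 hsts
      by_contra hXs
      push_neg at hXs
      have : s ∈ Kset := ⟨⟨hs0, le_trans hsts.le htsT⟩, hXs⟩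
      have := csInf_le hKbdd this
      linarith
    have heqn : ∀ s, 0 ≤ s → s < ts → f s = y s := by
      intro s hs0 hsts
      have := key s hs0 (le_trans hsts.le htsT)
        (fun u hu => hpos' u hu.1 (lt_of_le_of_lt hu.2 hsts))
      exact this ⟨hs0, le_refl s⟩
    obtain ⟨M, hM⟩ := (isCompact_Icc (a := (0:ℝ)) (b := ts)).exists_bound_of_continuousOn
      (hfc.mono (fun u hu => hu.1))
    have hM0 : 0 < M + 1 := by
      have := le_trans (norm_nonneg (f 0)) (hM 0 ⟨le_refl _, hts0⟩)
      linarith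
    set δ : ℝ := (α / (M+1)) ^ (p-2) with hδ_def
    have hδ0 : 0 < δ := Real.rpow_pos_of_pos (div_pos hα hM0) _
    -- find s near ts with 0 ≤ s < ts and X s < δ
    have hopen : IsOpen {u : ℝ | X u < δ} := isOpen_lt hXc continuous_const
    have hts_in : ts ∈ {u : ℝ | X u < δ} := by
      simp only [Set.mem_setOf_eq]; linarith
    obtain ⟨ε, hε0, hball⟩ := Metric.isOpen_iff.mp hopen ts hts_in
    set s : ℝ := ts - min (ε/2) (ts/2) with hs_def
    have hmin_pos : 0 < min (ε/2) (ts/2) := lt_min (by linarith) (by linarith)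
    have hs0 : 0 ≤ s := by
      have : min (ε/2) (ts/2) ≤ ts/2 := min_le_right _ _
      rw [hs_def]; linarith
    have hsts : s < ts := by rw [hs_def]; linarith
    have hs_ball : s ∈ Metric.ball ts ε := by
      rw [Metric.mem_ball, Real.dist_eq, hs_def]
      have h1 : min (ε/2) (ts/2) ≤ ε/2 := min_le_left _ _
      rw [abs_of_nonpos (by linarith)]
      linarith
    have hXsδ : X s < δ := hball hs_ball
    have hXs_pos : 0 < X s := hpos' s hs0 hsts
    -- y s > M + 1
    have hys : M + 1 < y s := by
      have h1 : X s ^ (1/(p-2)) < δ ^ (1/(p-2)) :=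
        Real.rpow_lt_rpow hXs_pos.le hXsδ (by positivity)
      have h2 : δ ^ (1/(p-2)) = α / (M+1) := by
        rw [hδ_def, ← Real.rpow_mul (div_pos hα hM0).le]
        rw [mul_one_div, div_self hp2', Real.rpow_one]
      rw [h2] at h1
      have h3 : 0 < X s ^ (1/(p-2)) := Real.rpow_pos_of_pos hXs_pos _
      have h4 : (α / (M+1))⁻¹ < (X s ^ (1/(p-2)))⁻¹ := by
        exact inv_strictAnti₀ h3 h1
      have h5 : y s = α * (X s ^ (1/(p-2)))⁻¹ := by
        show α * X s ^ e = α * (X s ^ (1/(p-2)))⁻¹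
        rw [he_def, Real.rpow_neg hXs_pos.le]
      rw [h5]
      have h6 : (α / (M+1))⁻¹ = (M+1) / α := by
        rw [inv_div]
      rw [h6] at h4
      calc M + 1 = α * ((M+1)/α) := by field_simp
      _ < α * (X s ^ (1/(p-2)))⁻¹ := by
          exact mul_lt_mul_of_pos_left h4 hα
    have hfs : f s = y s := heqn s hs0 hsts
    have hfM := hM s ⟨hs0, hsts.le⟩
    rw [Real.norm_eq_abs] at hfM
    rw [hfs] at hfM
    have h7 := le_abs_self (y s)
    linarith
  refine ⟨hposT, ?_⟩
  exact key T hT (le_refl T) hposT ⟨hT, le_refl T⟩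

end StmtAux

/-- Lemma `psi_integral`, the dynamics of ψ_α: componentwise,
[ψ_α(T)]ᵢ = α^p h_p(C ∫₀ᵀ [r(t)]ᵢ dt) with r(t) = Aᵀ(y − Aψ_α(t)), and C = 4 if
p = 2 and C = p(p−2)α^{p−2} if p > 2. -/
theorem stmt3 (m N : ℕ) (hm : 1 ≤ m) (hmN : m < N)
    (A : Matrix (Fin m) (Fin N) ℝ) (hA : A.rank = m)
    (y : Fin m → ℝ) (p : ℝ) (hp : 2 ≤ p) (α : ℝ) (hα : 0 < α)
    (θ : ℝ → EuclideanSpace ℝ (Fin N ⊕ Fin N))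
    (hθ0 : ∀ i : Fin N ⊕ Fin N, θ 0 i = α)
    (hflow : ∀ t : ℝ, 0 ≤ t →
      HasDerivWithinAt θ (-gradient (lossFun A y p) (θ t)) (Set.Ici 0) t)
    (T : ℝ) (hT : 0 ≤ T) (i : Fin N) :
    psiOf p (θ T) i =
      α ^ p * hfun p ((if p = 2 then (4 : ℝ) else p * (p - 2) * α ^ (p - 2)) *
        ∫ t in (0:ℝ)..T,
          A.transpose.mulVec (fun j => y j - A.mulVec (psiOf p (θ t)) j) i) := by
  classical
  have hp1 : (1:ℝ) ≤ p := by linarith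
  have hθc : ContinuousOn θ (Set.Ici 0) := fun t ht => (hflow t ht).continuousWithinAt
  have hθmax : Continuous (fun t : ℝ => θ (max t 0)) :=
    hθc.comp_continuous (continuous_id.max continuous_const) (fun t => le_max_right t 0)
  have hcpow : Continuous (fun x : ℝ => x ^ p) :=
    Differentiable.continuous (fun x => (Real.hasDerivAt_rpow_const (Or.inr hp1)).differentiableAt)
  set w : ℝ → ℝ := fun t => ∑ j, A j i * (y j - A.mulVec (psiOf p (θ (max t 0))) j) with hw_def
  have hwc : Continuous w := by
    apply continuous_finset_sum
    intro j _
    apply Continuous.mul continuous_const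
    apply Continuous.sub continuous_const
    have heq : (fun t : ℝ => A.mulVec (psiOf p (θ (max t 0))) j)
        = fun t => ∑ k, A j k * psiOf p (θ (max t 0)) k := by
      funext t; simp [Matrix.mulVec, dotProduct]
    rw [heq]
    apply continuous_finset_sum
    intro k _
    apply Continuous.mul continuous_const
    show Continuous fun t : ℝ => (θ (max t 0)) (Sum.inl k) ^ p - (θ (max t 0)) (Sum.inr k) ^ p
    apply Continuous.sub
    · exact hcpow.comp (((EuclideanSpace.proj (Sum.inl k) :
        EuclideanSpace ℝ (Fin N ⊕ Fin N) →L[ℝ] ℝ)).continuous.comp hθmax)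
    · exact hcpow.comp (((EuclideanSpace.proj (Sum.inr k) :
        EuclideanSpace ℝ (Fin N ⊕ Fin N) →L[ℝ] ℝ)).continuous.comp hθmax)
  have hgrad : ∀ t : ℝ, gradient (lossFun A y p) (θ t) = Gv A y p (θ t) :=
    fun t => (loss_grad A y p hp1 (θ t)).gradient
  have hflow' : ∀ t, 0 ≤ t → HasDerivWithinAt θ (-(Gv A y p (θ t))) (Set.Ici 0) t := by
    intro t ht; have h := hflow t ht; rwa [hgrad t] at h
  have hcomp : ∀ (ι : Fin N ⊕ Fin N) (t : ℝ), 0 ≤ t →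
      HasDerivWithinAt (fun u => θ u ι) (-(Gv A y p (θ t) ι)) (Set.Ici 0) t := by
    intro ι t ht
    have h := ((EuclideanSpace.proj ι :
      EuclideanSpace ℝ (Fin N ⊕ Fin N) →L[ℝ] ℝ).hasFDerivAt).comp_hasDerivWithinAt t (hflow' t ht)
    exact h
  have hww : ∀ t : ℝ, 0 ≤ t → w t = -∑ j, A j i * (A.mulVec (psiOf p (θ t)) j - y j) := by
    intro t ht
    simp only [hw_def, max_eq_left ht]
    rw [← Finset.sum_neg_distrib]
    exact Finset.sum_congr rfl (fun j _ => by ring)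
  have hfd : ∀ t, 0 ≤ t → HasDerivWithinAt (fun u => θ u (Sum.inl i))
      (p * (θ t (Sum.inl i)) ^ (p-1) * w t) (Set.Ici 0) t := by
    intro t ht
    have h := hcomp (Sum.inl i) t ht
    have hval : -(Gv A y p (θ t) (Sum.inl i)) = p * (θ t (Sum.inl i)) ^ (p-1) * w t := by
      simp only [Gv, PiLp.toLp_apply, Sum.elim_inl]
      rw [hww t ht]; ring
    rwa [hval] at h
  have hgd : ∀ t, 0 ≤ t → HasDerivWithinAt (fun u => θ u (Sum.inr i))
      (p * (θ t (Sum.inr i)) ^ (p-1) * (-(w t))) (Set.Ici 0) t := by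
    intro t ht
    have h := hcomp (Sum.inr i) t ht
    have hval : -(Gv A y p (θ t) (Sum.inr i)) = p * (θ t (Sum.inr i)) ^ (p-1) * (-(w t)) := by
      simp only [Gv, PiLp.toLp_apply, Sum.elim_inr, neg_neg]
      rw [hww t ht]; ring
    rwa [hval] at h
  have hIeq : (∫ t in (0:ℝ)..T,
      A.transpose.mulVec (fun j => y j - A.mulVec (psiOf p (θ t)) j) i) = ∫ t in (0:ℝ)..T, w t := by
    apply intervalIntegral.integral_congr
    intro t ht
    rw [Set.uIcc_of_le hT] at ht
    simp [hw_def, Matrix.mulVec, dotProduct, Matrix.transpose_apply, max_eq_left ht.1]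
  rw [hIeq]
  set I : ℝ := ∫ t in (0:ℝ)..T, w t with hI_def
  by_cases hp2 : p = 2
  · subst hp2
    rw [if_pos rfl]
    have hf2 : ∀ t, 0 ≤ t → HasDerivWithinAt (fun u => θ u (Sum.inl i))
        (2 * (θ t (Sum.inl i)) * w t) (Set.Ici 0) t := by
      intro t ht
      have h := hfd t ht
      have h21 : (2:ℝ) - 1 = 1 := by norm_num
      rw [h21, Real.rpow_one] at h
      exact h
    have hg2 : ∀ t, 0 ≤ t → HasDerivWithinAt (fun u => θ u (Sum.inr i))
        (2 * (θ t (Sum.inr i)) * (-(w t))) (Set.Ici 0) t := by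
      intro t ht
      have h := hgd t ht
      have h21 : (2:ℝ) - 1 = 1 := by norm_num
      rw [h21, Real.rpow_one] at h
      exact h
    have hplus := ode2 α w hwc _ (hθ0 (Sum.inl i)) hf2 T hT
    have hminus := ode2 α (fun s => -(w s)) hwc.neg _ (hθ0 (Sum.inr i)) hg2 T hT
    rw [intervalIntegral.integral_neg] at hminus
    show (θ T (Sum.inl i)) ^ (2:ℝ) - (θ T (Sum.inr i)) ^ (2:ℝ) = _
    rw [hplus, hminus]
    show _ = _ * hfun 2 _
    rw [hfun, if_pos rfl, Real.sinh_eq]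
    rw [Real.mul_rpow hα.le (Real.exp_nonneg _), Real.mul_rpow hα.le (Real.exp_nonneg _),
      ← Real.exp_mul, ← Real.exp_mul]
    rw [show (2 * I) * 2 = 4 * I by ring, show (2 * -I) * 2 = -(4 * I) by ring]
    ring
  · have hplt : 2 < p := lt_of_le_of_ne hp (Ne.symm hp2)
    rw [if_neg hp2]
    have hplus := ode_p p hplt α hα w hwc _ (hθ0 (Sum.inl i)) hfd T hT
    have hgd' : ∀ t, 0 ≤ t → HasDerivWithinAt (fun u => θ u (Sum.inr i))
        (p * (θ t (Sum.inr i)) ^ (p-1) * ((fun s => -(w s)) t)) (Set.Ici 0) t := hgd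
    have hminus := ode_p p hplt α hα (fun s => -(w s)) hwc.neg _ (hθ0 (Sum.inr i)) hgd' T hT
    rw [intervalIntegral.integral_neg] at hminus
    obtain ⟨hXpos, hfT⟩ := hplus
    obtain ⟨hYpos, hgT⟩ := hminus
    have hX : 0 < 1 - p * (p-2) * α^(p-2) * I := hXpos T ⟨hT, le_refl T⟩
    have hY : 0 < 1 + p * (p-2) * α^(p-2) * I := by
      have h := hYpos T ⟨hT, le_refl T⟩
      simp only [intervalIntegral.integral_neg, mul_neg, sub_neg_eq_add] at h
      rw [← hI_def] at h
      exact h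
    rw [mul_neg, sub_neg_eq_add, ← hI_def] at hgT
    rw [← hI_def] at hfT
    show (θ T (Sum.inl i)) ^ p - (θ T (Sum.inr i)) ^ p = _
    rw [hfT, hgT]
    rw [hfun, if_neg hp2]
    have hp2ne : p - 2 ≠ 0 := by intro h; apply hp2; linarith
    have hexp : (-(1/(p-2))) * p = -(p/(p-2)) := by
      field_simp
    have e1 : (α * (1 - p * (p-2) * α^(p-2) * I) ^ (-(1/(p-2)))) ^ p
        = α ^ p * (1 - p * (p-2) * α^(p-2) * I) ^ (-(p/(p-2))) := by
      rw [Real.mul_rpow hα.le (Real.rpow_nonneg hX.le _), ← Real.rpow_mul hX.le, hexp]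
    have e2 : (α * (1 + p * (p-2) * α^(p-2) * I) ^ (-(1/(p-2)))) ^ p
        = α ^ p * (1 + p * (p-2) * α^(p-2) * I) ^ (-(p/(p-2))) := by
      rw [Real.mul_rpow hα.le (Real.rpow_nonneg hY.le _), ← Real.rpow_mul hY.le, hexp]
    rw [e1, e2]
    ring
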